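/- Let 0 < α < π/2 and let Ω = {(ξ₁,ξ₂) ∈ ℝ² : ξ₁ ∈ [−2α,−α] ∪ [α,2α], ξ₂ ∈ [−α,α]}. Let A_{2^j} = diag(2^j, 2^{j/2}) and S_k = [[1,k],[0,1]]. Then ⋃_{j≥0} ⋃_{|k| ≤ ⌈2^{j/2}⌉} A_{2^j} S_kᵀ Ω covers the horizontal cone 𝒞 = {(ξ₁,ξ₂) : |ξ₁| ≥ α, |ξ₂/ξ₁| ≤ 1}. -/

import Mathlib

open Real Set

theorem shearlet_cone_covering (α : ℝ) (hα0 : 0 < α) (hαπ : α < π / 2) :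
    ∀ ξ : ℝ × ℝ, α ≤ |ξ.1| → |ξ.2 / ξ.1| ≤ 1 →
      ∃ j : ℕ, ∃ k : ℤ, (|k| : ℝ) ≤ ⌈(2 : ℝ) ^ ((j : ℝ) / 2)⌉₊ ∧
        ∃ ω : ℝ × ℝ,
          (ω.1 ∈ Set.Icc (-2 * α) (-α) ∪ Set.Icc α (2 * α)) ∧
          ω.2 ∈ Set.Icc (-α) α ∧
          ξ.1 = 2 ^ j * ω.1 ∧
          ξ.2 = (2 : ℝ) ^ ((j : ℝ) / 2) * ((k : ℝ) * ω.1 + ω.2) := by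
  rintro ⟨x, y⟩ hx hxy
  simp only at hx hxy ⊢
  have hx0 : x ≠ 0 := by
    intro h
    rw [h, abs_zero] at hx; linarith
  have hxpos : 0 < |x| := abs_pos.mpr hx0
  set r : ℝ := |x| / α with hr_def
  have hr1 : 1 ≤ r := (one_le_div hα0).mpr hx
  set j : ℕ := ⌊Real.logb 2 r⌋₊ with hj_def
  have hrpos : 0 < r := by linarith
  have h1 : (2:ℝ)^j ≤ r := by
    have hle : (j:ℝ) ≤ Real.logb 2 r :=
      Nat.floor_le (Real.logb_nonneg (by norm_num) hr1)
    calc (2:ℝ)^j = (2:ℝ)^(j:ℝ) := by rw [Real.rpow_natCast]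
      _ ≤ (2:ℝ)^(Real.logb 2 r) :=
          Real.rpow_le_rpow_of_exponent_le (by norm_num) hle
      _ = r := Real.rpow_logb (by norm_num) (by norm_num) hrpos
  have h2 : r < (2:ℝ)^(j+1) := by
    have hlt : Real.logb 2 r < (j:ℝ) + 1 := Nat.lt_floor_add_one _
    calc r = (2:ℝ)^(Real.logb 2 r) := (Real.rpow_logb (by norm_num) (by norm_num) hrpos).symm
      _ < (2:ℝ)^((j:ℝ)+1) := Real.rpow_lt_rpow_of_exponent_lt (by norm_num) hlt
      _ = (2:ℝ)^(j+1) := by rw [← Real.rpow_natCast]; push_cast; ring_nf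
  set P : ℝ := (2:ℝ)^j with hP_def
  have hPpos : 0 < P := by positivity
  set Q : ℝ := (2:ℝ)^((j:ℝ)/2) with hQ_def
  have hQpos : 0 < Q := by positivity
  have hQQ : Q * Q = P := by
    rw [hQ_def, hP_def, ← Real.rpow_add (by norm_num), ← Real.rpow_natCast 2 j]
    ring_nf
  -- bounds on |x|
  have hlow : α * P ≤ |x| := by
    have := (le_div_iff₀ hα0).mp h1
    linarith [this]
  have hup : |x| ≤ 2 * α * P := by
    have h2' : |x| / α < 2 * P := by
      have : (2:ℝ)^(j+1) = 2 * P := by rw [hP_def, pow_succ]; ring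
      rw [← this]; exact h2
    nlinarith [(div_lt_iff₀ hα0).mp h2']
  set w1 : ℝ := x / P with hw1_def
  have hw1abs : |w1| = |x| / P := by
    rw [hw1_def, abs_div, abs_of_pos hPpos]
  have hw1lo : α ≤ |w1| := by
    rw [hw1abs, le_div_iff₀ hPpos]; linarith
  have hw1hi : |w1| ≤ 2 * α := by
    rw [hw1abs, div_le_iff₀ hPpos]; linarith
  have hw1ne : w1 ≠ 0 := by
    intro h; rw [h, abs_zero] at hw1lo; linarith
  set t : ℝ := y / (Q * w1) with ht_def
  set k : ℤ := round t with hk_def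
  have hyQ : y / Q = t * w1 := by
    rw [ht_def]; field_simp
  set w2 : ℝ := y / Q - (k:ℝ) * w1 with hw2_def
  have htk : |t - (k:ℝ)| ≤ 1/2 := abs_sub_round t
  have hyabs : |y| ≤ |x| := by
    rw [abs_div] at hxy
    exact (div_le_one hxpos).mp hxy
  have htabs : |t| ≤ Q := by
    rw [ht_def, abs_div, abs_mul, abs_of_pos hQpos, div_le_iff₀ (by positivity)]
    calc |y| ≤ |x| := hyabs
      _ = P * |w1| := by rw [hw1abs]; field_simp
      _ = Q * (Q * |w1|) := by rw [← hQQ]; ring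
  refine ⟨j, k, ?_, ⟨w1, w2⟩, ?_, ?_, ?_, ?_⟩
  · -- |k| ≤ ⌈Q⌉₊
    by_contra hcon
    push_neg at hcon
    have h3 : ((⌈Q⌉₊ : ℤ) : ℝ) < ((|k| : ℤ) : ℝ) := by push_cast; push_cast at hcon; linarith
    have h4 : (⌈Q⌉₊ : ℤ) + 1 ≤ |k| := by exact_mod_cast h3
    have h5 : ((⌈Q⌉₊ : ℤ) : ℝ) + 1 ≤ ((|k| : ℤ) : ℝ) := by exact_mod_cast h4
    have h6 : Q ≤ (⌈Q⌉₊ : ℝ) := Nat.le_ceil Q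
    have h7 : (|k| : ℝ) ≤ |t| + 1/2 := by
      have := abs_sub_abs_le_abs_sub (k:ℝ) t
      rw [Int.cast_abs] at *
      have h8 : |t - (k:ℝ)| = |(k:ℝ) - t| := abs_sub_comm _ _
      push_cast at h5 ⊢
      linarith [htk, h8 ▸ htk, this]
    push_cast at h5
    linarith
  · -- w1 membership
    rcases lt_or_gt_of_ne hx0 with hneg | hpos
    · left
      have hw1neg : w1 < 0 := div_neg_of_neg_of_pos hneg hPpos
      have : |w1| = -w1 := abs_of_neg hw1neg
      constructor <;> [linarith [this ▸ hw1hi]; linarith [this ▸ hw1lo]]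
    · right
      have hw1pos : 0 < w1 := div_pos hpos hPpos
      have : |w1| = w1 := abs_of_pos hw1pos
      constructor <;> [linarith [this ▸ hw1lo]; linarith [this ▸ hw1hi]]
  · -- w2 ∈ [-α, α]
    have : |w2| ≤ α := by
      have hw2eq : w2 = (t - (k:ℝ)) * w1 := by rw [hw2_def, hyQ]; ring
      rw [hw2eq, abs_mul]
      calc |t - (k:ℝ)| * |w1| ≤ (1/2) * (2*α) := by
            apply mul_le_mul htk hw1hi (abs_nonneg _) (by norm_num)
        _ = α := by ring
    constructor <;> [linarith [neg_abs_le w2]; linarith [le_abs_self w2]]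
  · -- x = 2^j * w1
    rw [hw1_def]; field_simp; exact hP_def
  · -- y = Q * (k*w1 + w2)
    rw [hw2_def]; field_simp; ring
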